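/- Let k, r, a, b, m, n be integers with k ≥ 1, 0 ≤ a ≤ m, b ≤ n, kb ≥ max{0, a − kr}, and kn ≥ m − kr. Then the number of monotone lattice paths from (a,b) to (m,n) staying weakly above y = x/k − r equals the sum over i from 0 to ⌊(k(n+r)−m)/(k+1)⌋ of (−1)^i · ((k(b+r)−a+1)/(k(n+r−i)−a+1)) · C((k+1)(n−i)−a−b+kr, n−b−i) · C(k(n+r−i)−m, i). -/

import Mathlib

open Finset

/-- A monotone lattice path from `s` to `t` using unit steps `(1,0)` and `(0,1)`. -/
def MonoPath (s t : ℤ × ℤ) (P : List (ℤ × ℤ)) : Prop :=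
  P.head? = some s ∧ P.getLast? = some t ∧
  P.Chain' (fun p q => q = (p.1 + 1, p.2) ∨ q = (p.1, p.2 + 1))

/-- Integer binomial coefficient, `0` for negative lower index. -/
def IC (x j : ℤ) : ℕ := if j < 0 then 0 else x.toNat.choose j.toNat

/-- Number of monotone lattice paths from `(a,b)` to `(m,n)` staying weakly above `y = kx - r`. -/
noncomputable def NW (k r a b m n : ℤ) : ℕ :=
  Set.ncard {P : List (ℤ × ℤ) | MonoPath (a, b) (m, n) P ∧ ∀ p ∈ P, k * p.1 - r ≤ p.2}

/-- Number of monotone lattice paths from `(a,b)` to `(m,n)` staying strictly above `y = kx - r`. -/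
noncomputable def NS (k r a b m n : ℤ) : ℕ :=
  Set.ncard {P : List (ℤ × ℤ) | MonoPath (a, b) (m, n) P ∧ ∀ p ∈ P, k * p.1 - r < p.2}

/-- Number of monotone lattice paths from `(a,b)` to `(m,n)` staying weakly above `y = x/k - r`. -/
noncomputable def NWinv (k r a b m n : ℤ) : ℕ :=
  Set.ncard {P : List (ℤ × ℤ) | MonoPath (a, b) (m, n) P ∧ ∀ p ∈ P, p.1 - k * r ≤ k * p.2}

namespace Stmt11
open Polynomial


abbrev Step (p q : ℤ × ℤ) : Prop := q = (p.1 + 1, p.2) ∨ q = (p.1, p.2 + 1)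

lemma mono_ne_nil {s t P} (h : MonoPath s t P) : P ≠ [] := by
  rintro rfl; simp [MonoPath] at h

lemma mono_key : ∀ (P : List (ℤ × ℤ)) (s t : ℤ × ℤ), MonoPath s t P →
    s.1 ≤ t.1 ∧ s.2 ≤ t.2 ∧ s.1 + s.2 + (P.length - 1 : ℤ) = t.1 + t.2 := by
  intro P
  induction P with
  | nil => intro s t h; exact absurd rfl (mono_ne_nil h)
  | cons p rest ih =>
    intro s t h
    obtain ⟨h1, h2, h3⟩ := h
    simp only [List.head?_cons, Option.some_inj] at h1
    subst h1
    cases rest with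
    | nil =>
      simp only [List.getLast?_singleton, Option.some_inj] at h2
      subst h2; simp
    | cons q rest' =>
      rw [List.getLast?_cons_cons] at h2
      rw [List.Chain', List.isChain_cons_cons] at h3
      have ih' := ih q t ⟨by simp, h2, h3.2⟩
      simp only [List.length_cons] at ih' ⊢
      rcases h3.1 with h | h <;> subst h <;>
        refine ⟨?_, ?_, ?_⟩ <;> push_cast at ih' ⊢ <;> omega

lemma mono_self {s P} (h : MonoPath s s P) : P = [s] := by
  have hk := mono_key P s s h
  have hlen : P.length = 1 := by
    have := hk.2.2
    have h1 : 1 ≤ P.length := List.length_pos_iff.mpr (mono_ne_nil h)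
    omega
  obtain ⟨x, hx⟩ := List.length_eq_one_iff.mp hlen
  subst hx
  obtain ⟨h1, -, -⟩ := h
  simp only [List.head?_cons, Option.some_inj] at h1
  rw [h1]

lemma mono_singleton_iff (s t : ℤ × ℤ) (h : s = t) :
    {P : List (ℤ × ℤ) | MonoPath s t P} = {[s]} := by
  subst h
  ext P
  simp only [Set.mem_setOf_eq, Set.mem_singleton_iff]
  constructor
  · exact mono_self
  · rintro rfl
    refine ⟨rfl, rfl, by simp [List.Chain']⟩

/-- decomposition: paths from s ≠ t are cons of paths from the two successors -/
lemma mono_cons_iff {s t : ℤ × ℤ} (hst : s ≠ t) (P : List (ℤ × ℤ)) :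
    MonoPath s t P ↔ ∃ Q, P = s :: Q ∧
      (MonoPath (s.1 + 1, s.2) t Q ∨ MonoPath (s.1, s.2 + 1) t Q) := by
  constructor
  · intro h
    obtain ⟨h1, h2, h3⟩ := h
    cases P with
    | nil => simp at h1
    | cons p rest =>
      simp only [List.head?_cons, Option.some_inj] at h1
      subst h1
      cases rest with
      | nil =>
        simp only [List.getLast?_singleton, Option.some_inj] at h2
        exact absurd h2 hst
      | cons q rest' =>
        refine ⟨q :: rest', rfl, ?_⟩
        rw [List.getLast?_cons_cons] at h2
        rw [List.Chain', List.isChain_cons_cons] at h3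
        rcases h3.1 with hq | hq <;> [left; right] <;> subst hq <;>
          exact ⟨by simp, h2, h3.2⟩
  · rintro ⟨Q, rfl, hQ⟩
    have : Q ≠ [] := by rcases hQ with h | h <;> exact mono_ne_nil h
    obtain ⟨q, Q', rfl⟩ := List.exists_cons_of_ne_nil this
    rcases hQ with ⟨h1, h2, h3⟩ | ⟨h1, h2, h3⟩ <;>
      simp only [List.head?_cons, Option.some_inj] at h1 <;> subst h1 <;>
      exact ⟨by simp, by rw [List.getLast?_cons_cons]; exact h2,
        List.isChain_cons_cons.mpr ⟨by simp, h3⟩⟩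


def S (k r m n a b : ℤ) : Set (List (ℤ × ℤ)) :=
  {P : List (ℤ × ℤ) | MonoPath (a, b) (m, n) P ∧ ∀ p ∈ P, p.1 - k * r ≤ k * p.2}

lemma NWinv_eq (k r a b m n : ℤ) : NWinv k r a b m n = (S k r m n a b).ncard := rfl

variable {k r m n : ℤ}

lemma S_empty_a {a b : ℤ} (h : m < a) : S k r m n a b = ∅ := by
  ext P
  simp only [S, Set.mem_setOf_eq, Set.mem_empty_iff_false, iff_false, not_and]
  intro hP _
  have := (mono_key P _ _ hP).1
  simp at this; omega

lemma S_empty_b {a b : ℤ} (h : n < b) : S k r m n a b = ∅ := by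
  ext P
  simp only [S, Set.mem_setOf_eq, Set.mem_empty_iff_false, iff_false, not_and]
  intro hP _
  have := (mono_key P _ _ hP).2.1
  simp at this; omega

lemma S_empty_con {a b : ℤ} (h : ¬ (a - k * r ≤ k * b)) : S k r m n a b = ∅ := by
  ext P
  simp only [S, Set.mem_setOf_eq, Set.mem_empty_iff_false, iff_false, not_and]
  intro hP hcon
  have hmem : (a, b) ∈ P := by
    have h1 := hP.1
    cases P with
    | nil => simp at h1
    | cons p rest =>
      simp only [List.head?_cons, Option.some_inj] at h1
      subst h1; exact List.mem_cons_self
  exact h (hcon _ hmem)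

lemma S_single (hmn : m - k * r ≤ k * n) : S k r m n m n = {[(m, n)]} := by
  ext P
  simp only [S, Set.mem_setOf_eq, Set.mem_singleton_iff]
  constructor
  · rintro ⟨h1, -⟩; exact mono_self h1
  · rintro rfl
    refine ⟨⟨rfl, rfl, by simp [List.Chain']⟩, ?_⟩
    intro p hp
    simp only [List.mem_singleton] at hp
    subst hp; simpa using hmn

lemma S_eq {a b : ℤ} (hne : (a, b) ≠ (m, n)) (hcon : a - k * r ≤ k * b) :
    S k r m n a b = (fun Q => (a, b) :: Q) '' (S k r m n (a+1) b ∪ S k r m n a (b+1)) := by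
  ext P
  simp only [S, Set.mem_setOf_eq, Set.image_union, Set.mem_union, Set.mem_image]
  constructor
  · rintro ⟨hP, hc⟩
    rw [mono_cons_iff hne] at hP
    obtain ⟨Q, rfl, hQ | hQ⟩ := hP
    · exact Or.inl ⟨Q, ⟨hQ, fun p hp => hc p (List.mem_cons_of_mem _ hp)⟩, rfl⟩
    · exact Or.inr ⟨Q, ⟨hQ, fun p hp => hc p (List.mem_cons_of_mem _ hp)⟩, rfl⟩
  · rintro (⟨Q, ⟨hQ, hc⟩, rfl⟩ | ⟨Q, ⟨hQ, hc⟩, rfl⟩) <;>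
      refine ⟨(mono_cons_iff hne _).mpr ⟨Q, rfl, by tauto⟩, ?_⟩ <;>
      · intro p hp
        rcases List.mem_cons.mp hp with rfl | hp'
        · simpa using hcon
        · exact hc p hp'

lemma S_finite : ∀ (t : ℕ) (a b : ℤ), (m - a + (n - b)).toNat ≤ t →
    (S k r m n a b).Finite := by
  intro t
  induction t with
  | zero =>
    intro a b ht
    rcases lt_or_ge m a with h | h
    · rw [S_empty_a h]; exact Set.finite_empty
    rcases lt_or_ge n b with h' | h'
    · rw [S_empty_b h']; exact Set.finite_empty
    have : a = m ∧ b = n := by omega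
    obtain ⟨rfl, rfl⟩ := this
    exact Set.Finite.subset (Set.finite_singleton [(a, b)])
      (fun P hP => mono_self hP.1)
  | succ t ih =>
    intro a b ht
    rcases lt_or_ge m a with h | h
    · rw [S_empty_a h]; exact Set.finite_empty
    rcases lt_or_ge n b with h' | h'
    · rw [S_empty_b h']; exact Set.finite_empty
    by_cases hne : (a, b) = (m, n)
    · have hab : a = m ∧ b = n := by
        have := Prod.mk.injEq a b m n ▸ hne; tauto
      obtain ⟨rfl, rfl⟩ := hab
      exact Set.Finite.subset (Set.finite_singleton [(a, b)])
        (fun P hP => mono_self hP.1)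
    by_cases hcon : a - k * r ≤ k * b
    · rw [S_eq hne hcon]
      refine Set.Finite.image _ (Set.Finite.union (ih _ _ ?_) (ih _ _ ?_)) <;>
      · have : a ≠ m ∨ b ≠ n := by
          by_contra hc; push_neg at hc; exact hne (by rw [hc.1, hc.2])
        omega
    · rw [S_empty_con hcon]; exact Set.finite_empty

lemma S_finite' (a b : ℤ) : (S k r m n a b).Finite :=
  S_finite (m - a + (n - b)).toNat a b le_rfl

lemma NWinv_rec {a b : ℤ} (hne : (a, b) ≠ (m, n)) (hcon : a - k * r ≤ k * b) :
    NWinv k r a b m n = NWinv k r (a+1) b m n + NWinv k r a (b+1) m n := by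
  rw [NWinv_eq, NWinv_eq, NWinv_eq, S_eq hne hcon,
    Set.ncard_image_of_injective _ (List.cons_injective),
    Set.ncard_union_eq ?_ (S_finite' _ _) (S_finite' _ _)]
  rw [Set.disjoint_left]
  rintro Q hQ1 hQ2
  have e1 := hQ1.1.1
  have e2 := hQ2.1.1
  rw [e1] at e2
  simp only [Option.some_inj, Prod.mk.injEq] at e2
  omega

lemma NWinv_single (hmn : m - k * r ≤ k * n) : NWinv k r m n m n = 1 := by
  rw [NWinv_eq, S_single hmn, Set.ncard_singleton]

lemma NWinv_zero_a {a b : ℤ} (h : m < a) : NWinv k r a b m n = 0 := by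
  rw [NWinv_eq, S_empty_a h, Set.ncard_empty]

lemma NWinv_zero_b {a b : ℤ} (h : n < b) : NWinv k r a b m n = 0 := by
  rw [NWinv_eq, S_empty_b h, Set.ncard_empty]

lemma NWinv_zero_con {a b : ℤ} (h : ¬ (a - k * r ≤ k * b)) : NWinv k r a b m n = 0 := by
  rw [NWinv_eq, S_empty_con h, Set.ncard_empty]


lemma IC_neg {x j : ℤ} (h : j < 0) : IC x j = 0 := by simp [IC, h]
lemma IC_zero (x : ℤ) : IC x 0 = 1 := by simp [IC]
lemma IC_coe (x j : ℕ) : IC (x : ℤ) (j : ℤ) = x.choose j := by simp [IC]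
lemma IC_nonneg {x j : ℤ} (hj : 0 ≤ j) : IC x j = x.toNat.choose j.toNat := by
  simp [IC, not_lt.mpr hj]

noncomputable def T (k r a b m n : ℤ) (i : ℕ) : ℚ :=
  (-1 : ℚ) ^ i *
    (((k * (b + r) - a + 1 : ℤ) : ℚ) / ((k * (n + r - (i : ℤ)) - a + 1 : ℤ) : ℚ)) *
    (IC ((k + 1) * (n - (i : ℤ)) - a - b + k * r) (n - b - (i : ℤ)) : ℚ) *
    (IC (k * (n + r - (i : ℤ)) - m) (i : ℤ) : ℚ)

lemma core_id (k un sn : ℤ) (hk : 1 ≤ k) (hun : 0 ≤ un) (hsn : 0 ≤ sn)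
    (A B C : ℚ) (hP : C = A + B) (hR : A * (sn + 1) = B * (un + k * (sn + 1))) :
    ((un + 1 : ℚ) / (un + 1 + k * (sn + 1))) * C
      = ((un : ℚ) / (un + k * (sn + 1))) * A
        + ((un + 1 + k : ℚ) / (un + 1 + k * (sn + 1))) * B := by
  have h1 : ((un : ℚ) + 1 + k * (sn + 1)) ≠ 0 := by
    have : (1 : ℚ) ≤ (k : ℚ) := by exact_mod_cast hk
    have h2 : (0:ℚ) ≤ un := by exact_mod_cast hun
    have h3 : (0:ℚ) ≤ sn := by exact_mod_cast hsn
    nlinarith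
  have h2 : ((un : ℚ) + k * (sn + 1)) ≠ 0 := by
    have : (1 : ℚ) ≤ (k : ℚ) := by exact_mod_cast hk
    have h2 : (0:ℚ) ≤ un := by exact_mod_cast hun
    have h3 : (0:ℚ) ≤ sn := by exact_mod_cast hsn
    nlinarith
  subst hP
  field_simp
  ring_nf
  linear_combination (k : ℚ) * hR

/-- abstract termwise identity -/
lemma T_rec_abstract (k u s D X : ℤ) (E : ℚ) (hk : 1 ≤ k) (hu : 1 ≤ u)
    (hDus : D = u + k * s) (hXs : X = s + D - 1)
    (hEdge : u = 1 → s = 0 → E = 0) :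
    ((u : ℚ) / (D : ℚ)) * (IC X s : ℚ) * E
      = (((u : ℚ) - 1) / ((D : ℚ) - 1)) * (IC (X-1) s : ℚ) * E
        + (((u : ℚ) + k) / (D : ℚ)) * (IC (X-1) (s-1) : ℚ) * E := by
  rcases lt_trichotomy s 0 with hsneg | hszero | hspos
  · rw [IC_neg hsneg, IC_neg hsneg, IC_neg (by omega : s - 1 < 0)]
    push_cast; ring
  · subst hszero
    rw [IC_zero, IC_zero, IC_neg (by omega : (0:ℤ) - 1 < 0)]
    have hDu : D = u := by omega
    subst hDu
    rcases eq_or_lt_of_le hu with h1 | h2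
    · rw [hEdge h1.symm rfl]; ring
    · have c1 : ((D : ℚ)) ≠ 0 := by
        have : (0:ℚ) < (D:ℚ) := by exact_mod_cast (by omega : (0:ℤ) < D)
        linarith
      have c2 : ((D : ℚ) - 1) ≠ 0 := by
        have : (1:ℚ) < (D:ℚ) := by exact_mod_cast h2
        linarith
      rw [div_self c1, div_self c2]
      push_cast
      ring
  · -- s ≥ 1
    obtain ⟨sn, hsn⟩ : ∃ sn : ℕ, s = (sn : ℤ) + 1 := ⟨(s-1).toNat, by omega⟩
    obtain ⟨un, hun⟩ : ∃ un : ℕ, u = (un : ℤ) + 1 := ⟨(u-1).toNat, by omega⟩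
    have hks : 1 ≤ k * s := by nlinarith
    have hkssn : k * s = k * ((sn:ℤ) + 1) := by rw [hsn]
    have hD2 : D = (un : ℤ) + 1 + k * ((sn:ℤ) + 1) := by omega
    obtain ⟨xn, hxn1, hxn2⟩ : ∃ xn : ℕ, X - 1 = (xn : ℤ) ∧ (xn:ℤ) - (sn:ℤ) = (un:ℤ) + k * ((sn:ℤ)+1) := by
      refine ⟨(X-1).toNat, ?_, ?_⟩ <;> omega
    have hX1 : X = (xn : ℤ) + 1 := by omega
    have hxnsn : sn ≤ xn := by
      have : (sn:ℤ) ≤ (xn:ℤ) := by omega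
      exact_mod_cast this
    have i1 : IC X s = (xn + 1).choose (sn + 1) := by
      rw [hX1, hsn, show ((sn:ℤ) + 1) = ((sn + 1 : ℕ) : ℤ) by push_cast; ring,
        show ((xn:ℤ) + 1) = ((xn + 1 : ℕ) : ℤ) by push_cast; ring, IC_coe]
    have i2 : IC (X - 1) s = xn.choose (sn + 1) := by
      rw [hxn1, hsn, show ((sn:ℤ) + 1) = ((sn + 1 : ℕ) : ℤ) by push_cast; ring, IC_coe]
    have i3 : IC (X - 1) (s - 1) = xn.choose sn := by
      rw [hxn1, hsn, show ((sn:ℤ) + 1 - 1) = ((sn : ℕ) : ℤ) by push_cast; ring, IC_coe]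
    rw [i1, i2, i3]
    have hPascal : ((xn + 1).choose (sn + 1) : ℚ)
        = (xn.choose (sn + 1) : ℚ) + (xn.choose sn : ℚ) := by
      rw [Nat.choose_succ_succ]
      push_cast; ring
    have hRatio : (xn.choose (sn+1) : ℚ) * ((sn:ℚ) + 1)
        = (xn.choose sn : ℚ) * ((un:ℚ) + (k:ℚ) * ((sn:ℚ) + 1)) := by
      have hnat := Nat.choose_succ_right_eq xn sn
      have h2 : (xn.choose (sn+1) : ℚ) * ((sn:ℚ)+1) = (xn.choose sn : ℚ) * ((xn - sn : ℕ) : ℚ) := by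
        exact_mod_cast congrArg (Nat.cast (R := ℚ)) hnat
      rw [h2, Nat.cast_sub hxnsn]
      congr 1
      exact_mod_cast congrArg (Int.cast (R := ℚ)) hxn2
    have key := core_id k un sn hk (by positivity) (by positivity)
      (xn.choose (sn+1) : ℚ) (xn.choose sn : ℚ) ((xn+1).choose (sn+1) : ℚ)
      hPascal hRatio
    have cu : ((u : ℤ) : ℚ) = (un : ℚ) + 1 := by exact_mod_cast congrArg (Int.cast (R := ℚ)) hun
    have cD : ((D : ℤ) : ℚ) = (un : ℚ) + 1 + (k:ℚ) * ((sn:ℚ) + 1) := by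
      have := congrArg (Int.cast (R := ℚ)) hD2; push_cast at this; push_cast; linarith
    rw [cu, cD]
    linear_combination E * key


lemma T_rec (k r a b m n : ℤ) (hk : 1 ≤ k) (hb : b < n) (ham : a ≤ m)
    (hu : a ≤ k * (b + r)) (i : ℕ) :
    T k r a b m n i = T k r (a+1) b m n i + T k r a (b+1) m n i := by
  unfold T
  have e1 : k * (b + r) - (a+1) + 1 = (k * (b + r) - a + 1) - 1 := by ring
  have e2 : k * (n + r - (i:ℤ)) - (a+1) + 1 = (k * (n + r - (i:ℤ)) - a + 1) - 1 := by ring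
  have e3 : (k + 1) * (n - (i:ℤ)) - (a+1) - b + k * r
      = ((k + 1) * (n - (i:ℤ)) - a - b + k * r) - 1 := by ring
  have e4 : k * ((b+1) + r) - a + 1 = (k * (b + r) - a + 1) + k := by ring
  have e5 : (k + 1) * (n - (i:ℤ)) - a - (b+1) + k * r
      = ((k + 1) * (n - (i:ℤ)) - a - b + k * r) - 1 := by ring
  have e6 : n - (b+1) - (i:ℤ) = (n - b - (i:ℤ)) - 1 := by ring
  rw [e1, e2, e3, e4, e5, e6]
  have key := T_rec_abstract k (k * (b + r) - a + 1) (n - b - (i:ℤ))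
    (k * (n + r - (i:ℤ)) - a + 1) ((k + 1) * (n - (i:ℤ)) - a - b + k * r)
    (IC (k * (n + r - (i:ℤ)) - m) (i:ℤ) : ℚ) hk (by omega)
    (by ring) (by ring) ?_
  · push_cast at key ⊢
    linear_combination ((-1:ℚ)^i) * key
  · intro h1 h2
    have hiz : (i:ℤ) = n - b := by omega
    have harg : k * (n + r - (i:ℤ)) - m = a - m := by
      have : k * (n + r - (i:ℤ)) = k * (b + r) := by rw [hiz]; ring
      omega
    rw [harg, IC_nonneg (by positivity : (0:ℤ) ≤ (i:ℤ))]
    have h0 : (a - m).toNat = 0 := by omega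
    have hi1 : (i:ℤ).toNat = i := Int.toNat_natCast i
    have : 1 ≤ i := by omega
    rw [h0, hi1, Nat.choose_eq_zero_of_lt (by omega)]
    simp



/-- factorial identity: (e+1) C(Mm+d, d) C(Mm+1, i) = (Mm+1) C(e+1, i) C(Mm+d, e), i+d = e+1 -/
lemma NID (i d Mm e : ℕ) (h1 : i ≤ Mm + 1) (he : i + d = e + 1) :
    (e+1) * (Mm + d).choose d * (Mm + 1).choose i
      = (Mm + 1) * (e+1).choose i * (Mm + d).choose e := by
  have key : ((e:ℚ)+1) * ((Mm + d).choose d) * ((Mm + 1).choose i)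
      = ((Mm:ℚ) + 1) * ((e+1).choose i) * ((Mm + d).choose e) := by
    rw [Nat.cast_choose ℚ (show d ≤ Mm + d by omega),
      Nat.cast_choose ℚ (show i ≤ Mm + 1 from h1),
      Nat.cast_choose ℚ (show i ≤ e + 1 by omega),
      Nat.cast_choose ℚ (show e ≤ Mm + d by omega),
      show Mm + d - d = Mm by omega,
      show e + 1 - i = d by omega,
      show Mm + d - e = Mm + 1 - i by omega]
    rw [Nat.factorial_succ Mm, Nat.factorial_succ e]
    have f1 : ((Nat.factorial Mm : ℕ) : ℚ) ≠ 0 := by exact_mod_cast (Nat.factorial_ne_zero Mm)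
    have f2 : ((Nat.factorial e : ℕ) : ℚ) ≠ 0 := by exact_mod_cast (Nat.factorial_ne_zero e)
    have f3 : ((Nat.factorial d : ℕ) : ℚ) ≠ 0 := by exact_mod_cast (Nat.factorial_ne_zero d)
    have f4 : ((Nat.factorial i : ℕ) : ℚ) ≠ 0 := by exact_mod_cast (Nat.factorial_ne_zero i)
    have f5 : ((Nat.factorial (Mm + 1 - i) : ℕ) : ℚ) ≠ 0 := by exact_mod_cast (Nat.factorial_ne_zero _)
    have f6 : ((Nat.factorial (Mm + d) : ℕ) : ℚ) ≠ 0 := by exact_mod_cast (Nat.factorial_ne_zero _)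
    push_cast
    field_simp
  exact_mod_cast key

/-- the alternating sum is a coefficient of a polynomial divisible by X^s0 -/
lemma P0 (K s0 c : ℕ) (hs0 : 1 ≤ s0) :
    ∑ i ∈ range (s0+1),
      (-1:ℤ)^i * (s0.choose i) * ((c + (K+1)*(s0 - i)).choose (s0 - 1)) = 0 := by
  set Q : Polynomial ℤ := ((X + 1)^(K+1) - 1)^s0 * (X + 1)^c with hQ
  have hdvd : (X : Polynomial ℤ)^s0 ∣ Q := by
    apply Dvd.dvd.mul_right
    apply pow_dvd_pow_of_dvd
    rw [X_dvd_iff]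
    simp [coeff_X_add_one_pow]
  have hcoeff0 : Q.coeff (s0 - 1) = 0 := by
    obtain ⟨q, hq⟩ := hdvd
    rw [hq, mul_comm, coeff_mul_X_pow']
    simp [Nat.sub_lt hs0 one_pos]
  have hexp : Q = ∑ mm ∈ range (s0+1),
      Polynomial.C ((-1:ℤ)^(mm + s0) * (s0.choose mm : ℤ)) * (X+1)^((K+1)*mm + c) := by
    rw [hQ, sub_pow, Finset.sum_mul]
    apply Finset.sum_congr rfl
    intro mm _
    have hC : (Polynomial.C ((-1:ℤ)^(mm + s0) * (s0.choose mm : ℤ)) : Polynomial ℤ)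
        = (-1:Polynomial ℤ)^(mm + s0) * ((s0.choose mm : ℕ) : Polynomial ℤ) := by
      rw [map_mul, map_pow, map_neg, map_one]; simp
    rw [hC, one_pow, mul_one, pow_add, ← pow_mul]
    ring
  have hco : Q.coeff (s0 - 1) = ∑ mm ∈ range (s0+1),
      (-1:ℤ)^(mm + s0) * (s0.choose mm) * (((K+1)*mm + c).choose (s0 - 1)) := by
    rw [hexp, Polynomial.finset_sum_coeff]
    apply Finset.sum_congr rfl
    intro mm _
    rw [coeff_C_mul, coeff_X_add_one_pow]
  rw [hco] at hcoeff0
  rw [← hcoeff0]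
  rw [← Finset.sum_range_reflect (fun mm => (-1:ℤ)^(mm + s0) * (s0.choose mm) * (((K+1)*mm + c).choose (s0 - 1))) (s0+1)]
  apply Finset.sum_congr rfl
  intro i hi
  rw [Finset.mem_range] at hi
  have hi' : i ≤ s0 := by omega
  rw [show s0 + 1 - 1 - i = s0 - i by omega]
  rw [Nat.choose_symm hi']
  rw [show (K+1) * (s0 - i) + c = c + (K+1)*(s0-i) by ring]
  congr 1
  rw [show s0 - i + s0 = 2*(s0 - i) + i by omega]
  rw [pow_add, pow_mul]
  simp








lemma T_vanish (k r b m n : ℤ) (hk : 1 ≤ k) (hb : b < n)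
    (hu0 : 0 ≤ k * (b + r) - m) (hn : m - k * r ≤ k * n) :
    ∑ i ∈ range (((k * (n + r) - m) / (k + 1)).toNat + 1), T k r (m+1) b m n i = 0 := by
  by_cases hz : k * (b + r) - m = 0
  · apply Finset.sum_eq_zero
    intro i _
    unfold T
    rw [show k * (b + r) - (m+1) + 1 = 0 by omega]
    simp
  have hu1 : 1 ≤ k * (b + r) - m := by omega
  obtain ⟨s0N, hs0⟩ : ∃ s0N : ℕ, n - b = (s0N : ℤ) := ⟨(n-b).toNat, by omega⟩
  have hs01 : 1 ≤ s0N := by omega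
  obtain ⟨K, hK⟩ : ∃ K : ℕ, k = (K : ℤ) := ⟨k.toNat, by omega⟩
  subst hK
  have hK1 : 1 ≤ K := by omega
  obtain ⟨cN, hcN⟩ : ∃ cN : ℕ, (K:ℤ) * (b + r) - m - 1 = (cN : ℤ) :=
    ⟨((K:ℤ) * (b + r) - m - 1).toNat, by omega⟩
  set T0 : ℤ := (K:ℤ) * (n + r) - m with hT0def
  have hT0 : T0 = (cN : ℤ) + 1 + (K:ℤ) * (s0N:ℤ) := by
    have e : (K:ℤ) * (n + r) - m = ((K:ℤ) * (b + r) - m) + (K:ℤ) * (n - b) := by ring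
    rw [hT0def, e, hs0]
    omega
  have hKs0 : (0:ℤ) ≤ (K:ℤ) * (s0N:ℤ) := by positivity
  have hT0pos : 0 < T0 := by omega
  set Lz : ℤ := T0 / ((K:ℤ) + 1) with hLz
  have hLz0 : 0 ≤ Lz := Int.ediv_nonneg (by omega) (by omega)
  obtain ⟨L, hL⟩ : ∃ L : ℕ, Lz = (L : ℤ) := ⟨Lz.toNat, by omega⟩
  have hLtoNat : Lz.toNat = L := by omega
  have hL1 : ((K:ℤ) + 1) * (L : ℤ) ≤ T0 := by
    have := (Int.le_ediv_iff_mul_le (by omega : (0:ℤ) < (K:ℤ) + 1)).mp (le_of_eq hL.symm)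
    linarith
  have hL2 : T0 < ((K:ℤ) + 1) * ((L : ℤ) + 1) := by
    have := Int.lt_ediv_add_one_mul_self T0 (by omega : (0:ℤ) < (K:ℤ) + 1)
    rw [← hLz, hL] at this
    linarith
  set g : ℕ → ℚ := fun i => (-1 : ℚ)^i * (((cN : ℚ) + 1) / (s0N : ℚ)) *
      (s0N.choose i : ℚ) * ((cN + (K+1)*(s0N - i)).choose (s0N - 1) : ℚ) with hg
  have step1 : ∀ i ∈ range (L + 1), T (K:ℤ) r (m+1) b m n i = g i := by
    intro i hi
    rw [Finset.mem_range] at hi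
    have hiL : (i : ℤ) ≤ L := by exact_mod_cast Nat.lt_succ_iff.mp hi
    have hki : ((K:ℤ) + 1) * (i : ℤ) ≤ T0 :=
      le_trans (mul_le_mul_of_nonneg_left hiL (by omega)) hL1
    have hkie : ((K:ℤ) + 1) * (i:ℤ) = (K:ℤ)*(i:ℤ) + i := by ring
    unfold T
    rw [show (K:ℤ) * (b + r) - (m+1) + 1 = (cN : ℤ) + 1 by omega]
    have hM : (K:ℤ) * (n + r - (i:ℤ)) - (m+1) + 1 = T0 - (K:ℤ) * i := by rw [hT0def]; ring
    have hE : (K:ℤ) * (n + r - (i:ℤ)) - m = T0 - (K:ℤ) * i := by rw [hT0def]; ring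
    rw [hM, hE]
    by_cases his : i ≤ s0N
    · set d : ℕ := s0N - i with hd
      have hdz : (d : ℤ) = (s0N : ℤ) - i := by
        rw [hd]; push_cast [Nat.cast_sub his]; ring
      have hMge : (i : ℤ) ≤ T0 - (K:ℤ) * i := by omega
      have hMpos : 1 ≤ T0 - (K:ℤ) * i := by
        rcases Nat.eq_zero_or_pos i with h0 | h1
        · subst h0; omega
        · have : (1:ℤ) ≤ (i:ℤ) := by exact_mod_cast h1
          omega
      obtain ⟨Mm, hMm⟩ : ∃ Mm : ℕ, T0 - (K:ℤ) * i - 1 = (Mm : ℤ) :=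
        ⟨(T0 - (K:ℤ)*i - 1).toNat, by omega⟩
      have hMm1 : T0 - (K:ℤ) * i = (Mm : ℤ) + 1 := by omega
      have hiMm : i ≤ Mm + 1 := by
        have : (i : ℤ) ≤ (Mm : ℤ) + 1 := by omega
        exact_mod_cast this
      have hX : ((K:ℤ) + 1) * (n - (i:ℤ)) - (m+1) - b + (K:ℤ) * r = (Mm : ℤ) + d := by
        have e : ((K:ℤ) + 1) * (n - (i:ℤ)) - (m+1) - b + (K:ℤ) * r
            = (T0 - (K:ℤ) * i) + (n - b - i) - 1 := by rw [hT0def]; ring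
        rw [e, hs0]
        omega
      have hXs : n - b - (i : ℤ) = (d : ℤ) := by omega
      have i1 : IC (((K:ℤ) + 1) * (n - (i:ℤ)) - (m+1) - b + (K:ℤ) * r) (n - b - (i:ℤ))
          = (Mm + d).choose d := by
        rw [hX, hXs, show (Mm : ℤ) + d = ((Mm + d : ℕ) : ℤ) by push_cast; ring, IC_coe]
      have i2 : IC (T0 - (K:ℤ) * i) (i : ℤ) = (Mm + 1).choose i := by
        rw [hMm1, show (Mm : ℤ) + 1 = ((Mm + 1 : ℕ) : ℤ) by push_cast; ring, IC_coe]
      rw [i1, i2]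
      simp only [hg]
      have he : i + d = (s0N - 1) + 1 := by omega
      have hnid := NID i d Mm (s0N - 1) hiMm he
      have hMmd : Mm + d = cN + (K+1)*(s0N - i) := by
        have hexp : ((K:ℤ)+1) * ((s0N:ℤ) - i) = (K:ℤ)*(s0N:ℤ) - (K:ℤ)*i + (s0N:ℤ) - i := by ring
        have h1 : ((Mm : ℤ)) + d = (cN : ℤ) + ((K:ℤ)+1) * ((s0N : ℤ) - i) := by omega
        have h2 : ((cN + (K+1)*(s0N - i) : ℕ) : ℤ) = (cN : ℤ) + ((K:ℤ)+1) * ((s0N:ℤ) - i) := by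
          push_cast [Nat.cast_sub his]; ring
        omega
      rw [show (s0N - 1) + 1 = s0N by omega] at hnid
      rw [hMmd] at hnid
      have hnidq : ((s0N : ℚ)) * ((cN + (K+1)*(s0N - i)).choose d : ℚ) * ((Mm + 1).choose i : ℚ)
          = ((Mm : ℚ) + 1) * ((s0N).choose i : ℚ) * ((cN + (K+1)*(s0N - i)).choose (s0N - 1) : ℚ) := by
        exact_mod_cast congrArg (Nat.cast (R := ℚ)) hnid
      have hMq : ((T0 - (K:ℤ) * (i:ℤ) : ℤ) : ℚ) = (Mm : ℚ) + 1 := by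
        rw [hMm1]; push_cast; ring
      rw [hMq, hMmd]
      have hs0q : ((s0N : ℚ)) ≠ 0 := by positivity
      have hMmq : ((Mm : ℚ) + 1) ≠ 0 := by positivity
      have hcq : (((cN:ℤ) + 1 : ℤ) : ℚ) = (cN : ℚ) + 1 := by push_cast; ring
      rw [hcq]
      field_simp
      linear_combination hnidq
    · push_neg at his
      have hs : n - b - (i : ℤ) < 0 := by
        have : (s0N : ℤ) < i := by exact_mod_cast his
        omega
      rw [IC_neg hs]
      simp only [hg]
      rw [Nat.choose_eq_zero_of_lt his]
      simp
  rw [hLz] at hLtoNat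
  rw [hLtoNat, Finset.sum_congr rfl step1]
  set N : ℕ := max L s0N with hN
  have gz : ∀ i ∈ range (N + 1), i ∉ range (L + 1) → g i = 0 := by
    intro i hiN hiL
    rw [Finset.mem_range, Nat.lt_succ_iff] at hiN
    rw [Finset.mem_range, Nat.lt_succ_iff, not_le] at hiL
    by_cases his : i ≤ s0N
    · have hiL' : ((L:ℤ) + 1) ≤ (i : ℤ) := by exact_mod_cast hiL
      have hik : T0 + 1 ≤ ((K:ℤ)+1) * (i : ℤ) :=
        by linarith [mul_le_mul_of_nonneg_left hiL' (by omega : (0:ℤ) ≤ (K:ℤ)+1)]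
      have harg : ((cN + (K+1)*(s0N - i) : ℕ) : ℤ) = (cN:ℤ) + ((K:ℤ)+1) * ((s0N:ℤ) - i) := by
        push_cast [Nat.cast_sub his]; ring
      have hexp : ((K:ℤ)+1) * ((s0N:ℤ) - i) = (K:ℤ)*(s0N:ℤ) - (K:ℤ)*i + (s0N:ℤ) - i := by ring
      have hexp2 : ((K:ℤ)+1) * (i:ℤ) = (K:ℤ)*(i:ℤ) + i := by ring
      have hlt : (cN + (K+1)*(s0N - i) : ℕ) < s0N - 1 := by
        have hge : (0:ℤ) ≤ ((cN + (K+1)*(s0N - i) : ℕ) : ℤ) := Int.natCast_nonneg _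
        have hfin : ((cN + (K+1)*(s0N - i) : ℕ) : ℤ) < (s0N : ℤ) - 1 := by omega
        omega
      simp only [hg]
      rw [Nat.choose_eq_zero_of_lt hlt]
      simp
    · push_neg at his
      simp only [hg]
      rw [Nat.choose_eq_zero_of_lt his]
      simp
  have gz2 : ∀ i ∈ range (N + 1), i ∉ range (s0N + 1) → g i = 0 := by
    intro i _ hiS
    rw [Finset.mem_range, Nat.lt_succ_iff, not_le] at hiS
    simp only [hg]
    rw [Nat.choose_eq_zero_of_lt hiS]
    simp
  have hsub1 : range (L+1) ⊆ range (N+1) := by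
    apply Finset.range_subset_range.mpr; omega
  have hsub2 : range (s0N+1) ⊆ range (N+1) := by
    apply Finset.range_subset_range.mpr; omega
  rw [Finset.sum_subset hsub1 gz, ← Finset.sum_subset hsub2 gz2]
  have hsplit : ∑ i ∈ range (s0N + 1), g i
      = (((cN : ℚ) + 1) / (s0N : ℚ)) * ∑ i ∈ range (s0N + 1),
          ((-1:ℚ)^i * (s0N.choose i : ℚ) * ((cN + (K+1)*(s0N - i)).choose (s0N - 1) : ℚ)) := by
    rw [Finset.mul_sum]
    apply Finset.sum_congr rfl
    intro i _
    simp only [hg]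
    ring
  rw [hsplit]
  have hP := P0 K s0N cN hs01
  have hPq : ∑ i ∈ range (s0N + 1),
      ((-1:ℚ)^i * (s0N.choose i : ℚ) * ((cN + (K+1)*(s0N - i)).choose (s0N - 1) : ℚ)) = 0 := by
    have h2 := congrArg (Int.cast (R := ℚ)) hP
    push_cast at h2
    rw [← h2]
  rw [hPq, mul_zero]












lemma T_base (k r a m n : ℤ) (ha : a ≤ k * (n + r)) :
    ∑ i ∈ range (((k * (n + r) - m) / (k + 1)).toNat + 1), T k r a n m n i = 1 := by
  rw [Finset.sum_eq_single 0]
  · unfold T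
    simp only [Nat.cast_zero, sub_zero, pow_zero]
    rw [show n - n = (0:ℤ) by ring, IC_zero, IC_zero]
    have hne : ((k * (n + r) - a + 1 : ℤ) : ℚ) ≠ 0 := by
      have : (0:ℤ) < k * (n + r) - a + 1 := by omega
      exact_mod_cast this.ne'
    rw [div_self hne]
    norm_num
  · intro i _ hi
    unfold T
    have hs : n - n - (i:ℤ) < 0 := by
      have h1 : 1 ≤ i := Nat.one_le_iff_ne_zero.mpr hi
      have : (1:ℤ) ≤ (i:ℤ) := by exact_mod_cast h1
      omega
    rw [IC_neg hs]
    simp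
  · intro h
    exact absurd (Finset.mem_range.mpr (Nat.succ_pos _)) h

lemma main_aux (k r m n : ℤ) (hk : 1 ≤ k) (hn : m - k * r ≤ k * n) :
    ∀ t : ℕ, ∀ a b : ℤ, 0 ≤ a → a ≤ m → b ≤ n → 0 ≤ k * b → a - k * r ≤ k * b →
      (m - a + (n - b)).toNat ≤ t →
      (NWinv k r a b m n : ℚ)
        = ∑ i ∈ range (((k * (n + r) - m) / (k + 1)).toNat + 1), T k r a b m n i := by
  have hknr : k * (n + r) = k * n + k * r := by ring
  have hmkn : m ≤ k * (n + r) := by omega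
  intro t
  induction t with
  | zero =>
    intro a b ha ham hbn hb1 hb2 ht
    have hh : a = m ∧ b = n := by omega
    rw [hh.1, hh.2, NWinv_single hn, T_base k r m m n hmkn]
    norm_num
  | succ t ih =>
    intro a b ha ham hbn hb1 hb2 ht
    have hkb1 : k * (b + 1) = k * b + k := by ring
    have hkbr : k * (b + r) = k * b + k * r := by ring
    by_cases hbn' : b = n
    · rw [hbn'] at hb1 hb2 ht ⊢
      by_cases ham' : a = m
      · rw [ham', NWinv_single hn, T_base k r m m n hmkn]
        norm_num
      · have haltm : a < m := lt_of_le_of_ne ham ham'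
        have hrec := NWinv_rec (k := k) (r := r) (m := m) (n := n)
          (a := a) (b := n) (by simp [Prod.ext_iff]; intro h; omega) hb2
        have h2 : NWinv k r a (n+1) m n = 0 := NWinv_zero_b (by omega)
        have h1 : (NWinv k r (a+1) n m n : ℚ)
            = ∑ i ∈ range (((k * (n + r) - m) / (k + 1)).toNat + 1), T k r (a+1) n m n i := by
          apply ih (a+1) n (by omega) (by omega) le_rfl hb1 (by omega) (by omega)
        rw [T_base k r (a+1) m n (by omega)] at h1
        rw [T_base k r a m n (by omega)]
        rw [hrec, h2]
        push_cast
        rw [h1]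
        norm_num
    · have hblt : b < n := lt_of_le_of_ne hbn hbn'
      have hrec := NWinv_rec (k := k) (r := r) (m := m) (n := n)
        (a := a) (b := b) (by simp [Prod.ext_iff]; intro _ h; omega) hb2
      have IH2 : (NWinv k r a (b+1) m n : ℚ)
          = ∑ i ∈ range (((k * (n + r) - m) / (k + 1)).toNat + 1), T k r a (b+1) m n i := by
        apply ih a (b+1) ha ham (by omega) (by rw [hkb1]; omega) (by rw [hkb1]; omega) (by omega)
      have hu : a ≤ k * (b + r) := by omega
      have hsum : ∑ i ∈ range (((k * (n + r) - m) / (k + 1)).toNat + 1), T k r a b m n i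
          = (∑ i ∈ range (((k * (n + r) - m) / (k + 1)).toNat + 1), T k r (a+1) b m n i)
            + ∑ i ∈ range (((k * (n + r) - m) / (k + 1)).toNat + 1), T k r a (b+1) m n i := by
        rw [← Finset.sum_add_distrib]
        exact Finset.sum_congr rfl (fun i _ => T_rec k r a b m n hk hblt ham hu i)
      rw [hrec, hsum]
      push_cast
      rw [IH2]
      by_cases hcase : a + 1 ≤ m ∧ a + 1 ≤ k * (b + r)
      · have IH1 : (NWinv k r (a+1) b m n : ℚ)
            = ∑ i ∈ range (((k * (n + r) - m) / (k + 1)).toNat + 1), T k r (a+1) b m n i := by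
          apply ih (a+1) b (by omega) (by omega) hbn hb1 (by omega) (by omega)
        rw [IH1]
      · push_neg at hcase
        by_cases ham' : a = m
        · have hz1 : NWinv k r (a+1) b m n = 0 := NWinv_zero_a (by omega)
          have hz2 : ∑ i ∈ range (((k * (n + r) - m) / (k + 1)).toNat + 1), T k r (a+1) b m n i = 0 := by
            rw [show a + 1 = m + 1 by omega]
            exact T_vanish k r b m n hk hblt (by omega) hn
          rw [hz1, hz2]
          norm_num
        · have haku : a + 1 > k * (b + r) := by
            have := hcase (by omega)
            omega
          have hz1 : NWinv k r (a+1) b m n = 0 := by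
            apply NWinv_zero_con
            omega
          have hz2 : ∑ i ∈ range (((k * (n + r) - m) / (k + 1)).toNat + 1), T k r (a+1) b m n i = 0 := by
            apply Finset.sum_eq_zero
            intro i _
            unfold T
            rw [show k * (b + r) - (a+1) + 1 = 0 by omega]
            simp
          rw [hz1, hz2]
          norm_num


end Stmt11

theorem stmt11 (k r a b m n : ℤ) (hk : 1 ≤ k) (ha : 0 ≤ a) (ham : a ≤ m) (hbn : b ≤ n)
    (hb1 : 0 ≤ k * b) (hb2 : a - k * r ≤ k * b) (hn : m - k * r ≤ k * n) :
    (NWinv k r a b m n : ℚ) =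
      ∑ i ∈ Finset.range (((k * (n + r) - m) / (k + 1)).toNat + 1),
        (-1 : ℚ) ^ i *
          (((k * (b + r) - a + 1 : ℤ) : ℚ) / ((k * (n + r - (i : ℤ)) - a + 1 : ℤ) : ℚ)) *
          (IC ((k + 1) * (n - (i : ℤ)) - a - b + k * r) (n - b - (i : ℤ)) : ℚ) *
          (IC (k * (n + r - (i : ℤ)) - m) (i : ℤ) : ℚ) := by
  have h := Stmt11.main_aux k r m n hk hn (m - a + (n - b)).toNat a b ha ham hbn hb1 hb2 le_rfl
  rw [h]
  rfl
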